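/- Let θ be a real quadratic irrationality with discriminant Δ. For every norm-positive unit (u+v√Δ)/2 in the quadratic order O_Δ (i.e. u,v ∈ ℤ with u² − Δv² = 4), the matrix Φ((u+v√Δ)/2) := [[(u+bv)/2, −cv],[av, (u−bv)/2]], where (a,b,c) is the type of θ, lies in SL(2,ℤ) and fixes θ under fractional linear transformations. -/

import Mathlib

/-- Let `θ` be a real quadratic irrationality of type `(a,b,c)` (the unique
coprime triple with `a ≠ 0`, `θ = (b + √Δ)/(2a)` and `Δ := b² - 4ac` positive and not a
square).  For every norm-positive unit `(u + v√Δ)/2` of the quadratic order `O_Δ`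
(i.e. `u, v : ℤ` with `u² - Δv² = 4`), the matrix
`Φ((u+v√Δ)/2) = [[(u+bv)/2, -cv], [av, (u-bv)/2]]` has integer entries, lies in `SL(2,ℤ)`,
and fixes `θ` under fractional linear transformations. -/
theorem stmt0 (θ : ℝ) (a b c Δ : ℤ)
    (hirr : Irrational θ)
    (ha : a ≠ 0)
    (hcop : Int.gcd a (Int.gcd b c) = 1)
    (hΔ : Δ = b ^ 2 - 4 * a * c)
    (hΔsq : ¬ IsSquare Δ)
    (hΔpos : 0 < Δ)
    (hθ : θ = ((b : ℝ) + Real.sqrt (Δ : ℝ)) / (2 * (a : ℝ)))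
    (u v : ℤ) (huv : u ^ 2 - Δ * v ^ 2 = 4) :
    ∃ M : Matrix (Fin 2) (Fin 2) ℤ,
      2 * M 0 0 = u + b * v ∧
      M 0 1 = -(c * v) ∧
      M 1 0 = a * v ∧
      2 * M 1 1 = u - b * v ∧
      M.det = 1 ∧
      ((M 0 0 : ℝ) * θ + (M 0 1 : ℝ)) / ((M 1 0 : ℝ) * θ + (M 1 1 : ℝ)) = θ := by
  -- parity
  have hprod : (u + b * v) * (u - b * v) = 2 * (2 * (1 - a * c * v ^ 2)) := by
    linear_combination huv + v ^ 2 * hΔ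
  have hev : Even (u + b * v) := by
    rcases Int.even_or_odd (u + b * v) with h | h
    · exact h
    · exfalso
      have h' : Odd (u - b * v) := by
        rcases h with ⟨k, hk⟩; exact ⟨k - b * v, by omega⟩
      have ho : Odd ((u + b * v) * (u - b * v)) := h.mul h'
      rw [hprod] at ho
      exact (Int.not_odd_iff_even.mpr ⟨2 * (1 - a * c * v ^ 2), by ring⟩) ho
  have hev' : Even (u - b * v) := by
    rcases hev with ⟨k, hk⟩; exact ⟨k - b * v, by omega⟩
  obtain ⟨p, hp⟩ := hev
  obtain ⟨q, hq⟩ := hev'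
  have hps : 2 * p = u + b * v := by omega
  have hqs : 2 * q = u - b * v := by omega
  refine ⟨!![p, -(c * v); a * v, q], by simp [hp]; ring, by simp, by simp,
    by simp [hq]; ring, ?_, ?_⟩
  · -- determinant
    have h4 : 4 * (p * q + a * c * v ^ 2) = 4 * 1 := by
      linear_combination 2 * q * hps + (u + b * v) * hqs + huv + v ^ 2 * hΔ
    rw [Matrix.det_fin_two_of]
    linarith
  · -- fractional linear transformation fixes θ
    have hpR : 2 * (p : ℝ) = (u : ℝ) + (b : ℝ) * v := by exact_mod_cast hps
    have hqR : 2 * (q : ℝ) = (u : ℝ) - (b : ℝ) * v := by exact_mod_cast hqs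
    have haR : (a : ℝ) ≠ 0 := Int.cast_ne_zero.mpr ha
    have hΔR : Real.sqrt (Δ : ℝ) ^ 2 = (Δ : ℝ) := by
      rw [Real.sq_sqrt]; exact_mod_cast hΔpos.le
    have hΔR' : Real.sqrt (Δ : ℝ) ^ 2 = (b : ℝ) ^ 2 - 4 * a * c := by
      rw [hΔR]; push_cast [hΔ]; ring
    have hquad : (a : ℝ) * θ ^ 2 - (b : ℝ) * θ + (c : ℝ) = 0 := by
      rw [hθ]
      field_simp
      linear_combination hΔR'
    have hden : ((a : ℝ) * v) * θ + (q : ℝ) ≠ 0 := by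
      intro hzero
      by_cases hv : v = 0
      · subst hv
        have hq0 : (q : ℝ) = 0 := by push_cast at hzero; linarith
        have hq0' : q = 0 := by exact_mod_cast hq0
        have hu : u = 0 := by simpa [hq0'] using hq
        rw [hu] at huv
        simp at huv
      · have hav : ((a : ℝ) * v) ≠ 0 := by
          have : (v : ℝ) ≠ 0 := Int.cast_ne_zero.mpr hv
          exact mul_ne_zero haR this
        apply hirr
        refine ⟨(-q : ℚ) / ((a : ℚ) * v), ?_⟩
        push_cast
        field_simp
        linarith
    have e00 : (!![p, -(c * v); a * v, q] : Matrix (Fin 2) (Fin 2) ℤ) 0 0 = p := rfl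
    have e01 : (!![p, -(c * v); a * v, q] : Matrix (Fin 2) (Fin 2) ℤ) 0 1 = -(c * v) := rfl
    have e10 : (!![p, -(c * v); a * v, q] : Matrix (Fin 2) (Fin 2) ℤ) 1 0 = a * v := rfl
    have e11 : (!![p, -(c * v); a * v, q] : Matrix (Fin 2) (Fin 2) ℤ) 1 1 = q := rfl
    rw [e00, e01, e10, e11]
    push_cast
    rw [div_eq_iff hden]
    linear_combination (θ / 2) * hpR - (θ / 2) * hqR - (v : ℝ) * hquad
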